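/- Let U_1, ..., U_G be M×r_g complex matrices with orthonormal columns satisfying U_g^H U_j = 0 for g ≠ j, let Λ_g and Ξ_g be positive definite r_g×r_g Hermitian matrices, let Δ = σ² I_M with σ² > 0 and α > 0. Define C_g = U_g Λ_g U_g^H and E_g = U_g Ξ_g U_g^H. Then C_g - C_g (C_g + Δ + (1/α) Σ_j U_j Ξ_j U_j^H)^{-1} C_g = C_g - C_g (C_g + Δ + (1/α) E_g)^{-1} C_g = U_g (Λ_g^{-1} + (σ² I + (1/α)Ξ_g)^{-1})^{-1} U_g^H. -/

import Mathlib

open Matrix ComplexOrder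


lemma aux_smul_posDef {n : Type*} [Fintype n] {A : Matrix n n ℂ} (hA : A.PosDef) {c : ℝ}
    (hc : 0 < c) : ((c : ℂ) • A).PosDef := by
  refine ⟨?_, fun x hx => ?_⟩
  · unfold Matrix.IsHermitian
    rw [conjTranspose_smul, hA.1.eq]
    congr 1
    simp
  · exact (hA.smul (by exact_mod_cast hc : (0 : ℂ) < (c : ℂ))).2 hx

lemma aux_key_inv {n : Type*} [Fintype n] [DecidableEq n] (L T : Matrix n n ℂ)
    (hL : IsUnit L.det) (hT : IsUnit T.det) (hLT : IsUnit (L + T).det) :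
    L - L * (L + T)⁻¹ * L = (L⁻¹ + T⁻¹)⁻¹ := by
  have h1 : L⁻¹ + T⁻¹ = T⁻¹ * ((L + T) * L⁻¹) := by
    rw [add_mul, Matrix.mul_nonsing_inv _ hL, mul_add, mul_one, ← mul_assoc,
        Matrix.nonsing_inv_mul _ hT, one_mul, add_comm]
  rw [h1, Matrix.mul_inv_rev, Matrix.mul_inv_rev, Matrix.nonsing_inv_nonsing_inv _ hL,
      Matrix.nonsing_inv_nonsing_inv _ hT]
  have h3 : L * ((L + T)⁻¹ * T) = L - L * ((L + T)⁻¹ * L) := by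
    calc L * ((L + T)⁻¹ * T) = L * ((L + T)⁻¹ * ((L + T) - L)) := by rw [add_sub_cancel_left]
      _ = L * ((L + T)⁻¹ * (L + T) - (L + T)⁻¹ * L) := by rw [mul_sub]
      _ = L * (1 - (L + T)⁻¹ * L) := by rw [Matrix.nonsing_inv_mul _ hLT]
      _ = L - L * ((L + T)⁻¹ * L) := by rw [mul_sub, mul_one]
  rw [mul_assoc, mul_assoc]
  exact h3.symm

lemma aux_sandwich {M G : ℕ} (r : Fin G → ℕ)
    (U : ∀ g : Fin G, Matrix (Fin M) (Fin (r g)) ℂ)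
    (hU : ∀ g, (U g)ᴴ * U g = 1)
    (horth : ∀ g j, g ≠ j → (U g)ᴴ * U j = 0)
    (g : Fin G) (Y : Matrix (Fin (r g)) (Fin (r g)) ℂ) :
    ∑ j, U j * ((U j)ᴴ * (U g * Y * (U g)ᴴ) * U j) * (U j)ᴴ = U g * Y * (U g)ᴴ := by
  rw [Finset.sum_eq_single g]
  · have h : (U g)ᴴ * (U g * Y * (U g)ᴴ) * U g = ((U g)ᴴ * U g) * Y * ((U g)ᴴ * U g) := by
      simp only [Matrix.mul_assoc]
    rw [h, hU g, one_mul, mul_one]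
  · intro j _ hj
    have h : (U j)ᴴ * (U g * Y * (U g)ᴴ) * U j = ((U j)ᴴ * U g) * (Y * ((U g)ᴴ * U j)) := by
      simp only [Matrix.mul_assoc]
    rw [h, horth j g hj, Matrix.zero_mul, Matrix.mul_zero, Matrix.zero_mul]
  · intro h
    exact absurd (Finset.mem_univ g) h

lemma aux_inv_sum {M G : ℕ} (r : Fin G → ℕ)
    (U : ∀ g : Fin G, Matrix (Fin M) (Fin (r g)) ℂ)
    (hU : ∀ g, (U g)ᴴ * U g = 1)
    (horth : ∀ g j, g ≠ j → (U g)ᴴ * U j = 0)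
    (σ : ℂ) (hσ : σ ≠ 0)
    (D : ∀ g : Fin G, Matrix (Fin (r g)) (Fin (r g)) ℂ)
    (hD : ∀ g, IsUnit (σ • (1 : Matrix (Fin (r g)) (Fin (r g)) ℂ) + D g).det) :
    (σ • (1 : Matrix (Fin M) (Fin M) ℂ) + ∑ j, U j * D j * (U j)ᴴ)⁻¹
      = σ⁻¹ • (1 : Matrix (Fin M) (Fin M) ℂ)
        + ∑ j, U j * ((σ • 1 + D j)⁻¹ - σ⁻¹ • 1) * (U j)ᴴ := by
  apply Matrix.inv_eq_right_inv
  set B : ∀ g : Fin G, Matrix (Fin (r g)) (Fin (r g)) ℂ :=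
    fun j => (σ • 1 + D j)⁻¹ - σ⁻¹ • 1 with hB
  have hBdef : ∀ j, (σ • (1 : Matrix (Fin (r j)) (Fin (r j)) ℂ) + D j)⁻¹ - σ⁻¹ • 1 = B j :=
    fun _ => rfl
  simp only [hBdef]
  have hBzero : ∀ j, σ • B j + σ⁻¹ • D j + D j * B j = 0 := by
    intro j
    have h1 : σ • B j + D j * B j = (σ • 1 + D j) * B j := by
      rw [add_mul, Matrix.smul_mul, one_mul]
    have h2 : (σ • (1 : Matrix (Fin (r j)) (Fin (r j)) ℂ) + D j) * B j = - (σ⁻¹ • D j) := by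
      rw [hB]
      simp only [mul_sub, Matrix.mul_nonsing_inv _ (hD j)]
      rw [Matrix.mul_smul, mul_one, smul_add, smul_smul, inv_mul_cancel₀ hσ, one_smul]
      abel
    calc σ • B j + σ⁻¹ • D j + D j * B j
        = (σ • B j + D j * B j) + σ⁻¹ • D j := by abel
      _ = 0 := by rw [h1, h2]; abel
  -- expand the product
  have hcross : ∀ j : Fin G, (U j * D j * (U j)ᴴ) * (∑ k, U k * B k * (U k)ᴴ)
      = U j * (D j * B j) * (U j)ᴴ := by
    intro j
    rw [Finset.mul_sum, Finset.sum_eq_single j]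
    · have h : (U j * D j * (U j)ᴴ) * (U j * B j * (U j)ᴴ)
          = U j * (D j * ((U j)ᴴ * U j) * B j) * (U j)ᴴ := by simp only [Matrix.mul_assoc]
      rw [h, hU j, mul_one]
    · intro k _ hk
      have h : (U j * D j * (U j)ᴴ) * (U k * B k * (U k)ᴴ)
          = U j * D j * (((U j)ᴴ * U k) * (B k * (U k)ᴴ)) := by simp only [Matrix.mul_assoc]
      rw [h, horth j k (Ne.symm hk), Matrix.zero_mul, Matrix.mul_zero]
    · intro h
      exact absurd (Finset.mem_univ j) h
  rw [mul_add, add_mul, add_mul]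
  rw [smul_mul_smul_comm, mul_inv_cancel₀ hσ, one_mul, one_smul]
  rw [Matrix.smul_mul, one_mul, Matrix.mul_smul, mul_one]
  rw [Finset.smul_sum, Finset.smul_sum, Finset.sum_mul]
  have hrest : (∑ j, σ⁻¹ • (U j * D j * (U j)ᴴ)) + ((∑ j, σ • (U j * B j * (U j)ᴴ))
      + ∑ j, (U j * D j * (U j)ᴴ) * (∑ k, U k * B k * (U k)ᴴ)) = 0 := by
    rw [← Finset.sum_add_distrib, ← Finset.sum_add_distrib]
    apply Finset.sum_eq_zero
    intro j _
    rw [hcross j]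
    have e1 : σ • (U j * B j * (U j)ᴴ) = U j * (σ • B j) * (U j)ᴴ := by
      rw [Matrix.mul_smul, Matrix.smul_mul]
    have e2 : σ⁻¹ • (U j * D j * (U j)ᴴ) = U j * (σ⁻¹ • D j) * (U j)ᴴ := by
      rw [Matrix.mul_smul, Matrix.smul_mul]
    have e3 : σ⁻¹ • D j + (σ • B j + D j * B j) = 0 := by
      calc σ⁻¹ • D j + (σ • B j + D j * B j) = σ • B j + σ⁻¹ • D j + D j * B j := by abel
        _ = 0 := hBzero j
    rw [e1, e2, ← Matrix.add_mul, ← Matrix.add_mul, ← Matrix.mul_add, ← Matrix.mul_add, e3,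
      Matrix.mul_zero, Matrix.zero_mul]
  rw [add_assoc, hrest, add_zero]

lemma aux_core {M G : ℕ} (r : Fin G → ℕ)
    (U : ∀ g : Fin G, Matrix (Fin M) (Fin (r g)) ℂ)
    (hU : ∀ g, (U g)ᴴ * U g = 1)
    (horth : ∀ g j, g ≠ j → (U g)ᴴ * U j = 0)
    (σ : ℂ) (hσ : σ ≠ 0)
    (D : ∀ g : Fin G, Matrix (Fin (r g)) (Fin (r g)) ℂ)
    (hD : ∀ g, IsUnit (σ • (1 : Matrix (Fin (r g)) (Fin (r g)) ℂ) + D g).det)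
    (g : Fin G) (L : Matrix (Fin (r g)) (Fin (r g)) ℂ) :
    U g * L * (U g)ᴴ - (U g * L * (U g)ᴴ) *
        (σ • (1 : Matrix (Fin M) (Fin M) ℂ) + ∑ j, U j * D j * (U j)ᴴ)⁻¹ * (U g * L * (U g)ᴴ)
      = U g * (L - L * (σ • 1 + D g)⁻¹ * L) * (U g)ᴴ := by
  rw [aux_inv_sum r U hU horth σ hσ D hD]
  have hmid : (U g * L * (U g)ᴴ) *
      (σ⁻¹ • (1 : Matrix (Fin M) (Fin M) ℂ)
        + ∑ j, U j * ((σ • 1 + D j)⁻¹ - σ⁻¹ • 1) * (U j)ᴴ) * (U g * L * (U g)ᴴ)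
      = U g * (L * (σ • 1 + D g)⁻¹ * L) * (U g)ᴴ := by
    rw [mul_add, Matrix.mul_smul, mul_one, Finset.mul_sum, add_mul, Matrix.smul_mul,
      Finset.sum_mul]
    have h1 : σ⁻¹ • ((U g * L * (U g)ᴴ) * (U g * L * (U g)ᴴ))
        = U g * (σ⁻¹ • (L * L)) * (U g)ᴴ := by
      have e : (U g * L * (U g)ᴴ) * (U g * L * (U g)ᴴ)
          = U g * (L * ((U g)ᴴ * U g) * L) * (U g)ᴴ := by simp only [Matrix.mul_assoc]
      rw [e, hU g, mul_one, Matrix.mul_smul, Matrix.smul_mul]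
    have h2 : ∑ j, (U g * L * (U g)ᴴ) * (U j * ((σ • 1 + D j)⁻¹ - σ⁻¹ • 1) * (U j)ᴴ)
          * (U g * L * (U g)ᴴ)
        = U g * (L * ((σ • 1 + D g)⁻¹ - σ⁻¹ • 1) * L) * (U g)ᴴ := by
      rw [Finset.sum_eq_single g]
      · have e : (U g * L * (U g)ᴴ) * (U g * ((σ • 1 + D g)⁻¹ - σ⁻¹ • 1) * (U g)ᴴ)
            * (U g * L * (U g)ᴴ)
            = U g * (L * ((U g)ᴴ * U g) * ((σ • 1 + D g)⁻¹ - σ⁻¹ • 1) * ((U g)ᴴ * U g) * L)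
              * (U g)ᴴ := by simp only [Matrix.mul_assoc]
        rw [e, hU g, mul_one, Matrix.mul_one]
      · intro j _ hj
        have e : (U g * L * (U g)ᴴ) * (U j * ((σ • 1 + D j)⁻¹ - σ⁻¹ • 1) * (U j)ᴴ)
            * (U g * L * (U g)ᴴ)
            = U g * L * (((U g)ᴴ * U j) * ((((σ • 1 + D j)⁻¹ - σ⁻¹ • 1) * ((U j)ᴴ
              * (U g * L * (U g)ᴴ))))) := by simp only [Matrix.mul_assoc]
        rw [e, horth g j (Ne.symm hj), Matrix.zero_mul, Matrix.mul_zero]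
      · intro h
        exact absurd (Finset.mem_univ g) h
    rw [h1, h2, ← Matrix.add_mul, ← Matrix.mul_add]
    congr 2
    rw [Matrix.mul_sub, Matrix.sub_mul, Matrix.mul_smul, Matrix.smul_mul, mul_one]
    abel
  rw [hmid, Matrix.mul_sub, Matrix.sub_mul]


theorem stmt_2 {M G : ℕ} (r : Fin G → ℕ)
    (U : ∀ g : Fin G, Matrix (Fin M) (Fin (r g)) ℂ)
    (hU : ∀ g, (U g)ᴴ * U g = 1)
    (horth : ∀ g j, g ≠ j → (U g)ᴴ * U j = 0)
    (Λ Ξ : ∀ g : Fin G, Matrix (Fin (r g)) (Fin (r g)) ℂ)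
    (hΛ : ∀ g, (Λ g).PosDef) (hΞ : ∀ g, (Ξ g).PosDef)
    (σ2 α : ℝ) (hσ : 0 < σ2) (hα : 0 < α)
    (Δ : Matrix (Fin M) (Fin M) ℂ) (hΔ : Δ = (σ2 : ℂ) • 1)
    (C E : Fin G → Matrix (Fin M) (Fin M) ℂ)
    (hC : ∀ g, C g = U g * Λ g * (U g)ᴴ)
    (hE : ∀ g, E g = U g * Ξ g * (U g)ᴴ)
    (g : Fin G) :
    C g - C g * (C g + Δ + (α⁻¹ : ℂ) • ∑ j, U j * Ξ j * (U j)ᴴ)⁻¹ * C g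
        = C g - C g * (C g + Δ + (α⁻¹ : ℂ) • E g)⁻¹ * C g
      ∧ C g - C g * (C g + Δ + (α⁻¹ : ℂ) • E g)⁻¹ * C g
        = U g * ((Λ g)⁻¹ + ((σ2 : ℂ) • 1 + (α⁻¹ : ℂ) • Ξ g)⁻¹)⁻¹ * (U g)ᴴ := by
  have hσ' : (σ2 : ℂ) ≠ 0 := by exact_mod_cast hσ.ne'
  have hα' : (0 : ℝ) < α⁻¹ := inv_pos.2 hα
  have pd1 : ∀ n : ℕ, ((σ2 : ℂ) • (1 : Matrix (Fin n) (Fin n) ℂ)).PosDef :=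
    fun n => aux_smul_posDef Matrix.PosDef.one hσ
  have pdΞ : ∀ j, ((α⁻¹ : ℂ) • Ξ j).PosDef := fun j => by
    rw [show ((α : ℂ))⁻¹ = ((α⁻¹ : ℝ) : ℂ) from (Complex.ofReal_inv α).symm]
    exact aux_smul_posDef (hΞ j) hα'
  set T : Matrix (Fin (r g)) (Fin (r g)) ℂ := (σ2 : ℂ) • 1 + (α⁻¹ : ℂ) • Ξ g with hT
  have pdT : T.PosDef := (pd1 (r g)).add (pdΞ g)
  have invΛ : IsUnit (Λ g).det := (hΛ g).det_pos.ne'.isUnit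
  have invT : IsUnit T.det := pdT.det_pos.ne'.isUnit
  have invΛT : IsUnit (Λ g + T).det := ((hΛ g).add pdT).det_pos.ne'.isUnit
  -- sandwich at g equals the matrix itself
  have hsand_g : ∀ Y : Matrix (Fin (r g)) (Fin (r g)) ℂ,
      (U g)ᴴ * (U g * Y * (U g)ᴴ) * U g = Y := by
    intro Y
    have e : (U g)ᴴ * (U g * Y * (U g)ᴴ) * U g = ((U g)ᴴ * U g) * Y * ((U g)ᴴ * U g) := by
      simp only [Matrix.mul_assoc]
    rw [e, hU g, one_mul, mul_one]
  ---- Part A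
  set D1 : ∀ j : Fin G, Matrix (Fin (r j)) (Fin (r j)) ℂ :=
    fun j => (α⁻¹ : ℂ) • Ξ j + (U j)ᴴ * (U g * Λ g * (U g)ᴴ) * U j with hD1def
  have hD1 : ∀ j, IsUnit ((σ2 : ℂ) • (1 : Matrix (Fin (r j)) (Fin (r j)) ℂ) + D1 j).det := by
    intro j
    have hS : ((U j)ᴴ * (U g * Λ g * (U g)ᴴ) * U j).PosSemidef :=
      ((hΛ g).posSemidef.mul_mul_conjTranspose_same (U g)).conjTranspose_mul_mul_same (U j)
    have : ((σ2 : ℂ) • (1 : Matrix (Fin (r j)) (Fin (r j)) ℂ) + D1 j)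
        = ((σ2 : ℂ) • 1 + (α⁻¹ : ℂ) • Ξ j) + (U j)ᴴ * (U g * Λ g * (U g)ᴴ) * U j := by
      rw [hD1def]; abel
    rw [this]
    exact (((pd1 (r j)).add (pdΞ j)).add_posSemidef hS).det_pos.ne'.isUnit
  have hM1 : C g + Δ + (α⁻¹ : ℂ) • ∑ j, U j * Ξ j * (U j)ᴴ
      = (σ2 : ℂ) • 1 + ∑ j, U j * D1 j * (U j)ᴴ := by
    have hsum : ∑ j, U j * D1 j * (U j)ᴴ
        = (α⁻¹ : ℂ) • (∑ j, U j * Ξ j * (U j)ᴴ) + U g * Λ g * (U g)ᴴ := by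
      calc ∑ j, U j * D1 j * (U j)ᴴ
          = ∑ j, ((α⁻¹ : ℂ) • (U j * Ξ j * (U j)ᴴ)
              + U j * ((U j)ᴴ * (U g * Λ g * (U g)ᴴ) * U j) * (U j)ᴴ) := by
            refine Finset.sum_congr rfl fun j _ => ?_
            rw [hD1def]
            rw [Matrix.mul_add, Matrix.add_mul]
            congr 1
            rw [Matrix.mul_smul, Matrix.smul_mul]
        _ = _ := by
            rw [Finset.sum_add_distrib, ← Finset.smul_sum,
              aux_sandwich r U hU horth g (Λ g)]
    rw [hC g, hΔ, hsum]
    abel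
  have hD1g : (σ2 : ℂ) • 1 + D1 g = Λ g + T := by
    rw [hD1def]
    simp only
    rw [hsand_g (Λ g), hT]
    abel
  have eqA : C g - C g * (C g + Δ + (α⁻¹ : ℂ) • ∑ j, U j * Ξ j * (U j)ᴴ)⁻¹ * C g
      = U g * ((Λ g)⁻¹ + T⁻¹)⁻¹ * (U g)ᴴ := by
    rw [hM1, hC g, aux_core r U hU horth (σ2 : ℂ) hσ' D1 hD1 g (Λ g), hD1g,
      aux_key_inv (Λ g) T invΛ invT invΛT]
  ---- Part B
  set D2 : ∀ j : Fin G, Matrix (Fin (r j)) (Fin (r j)) ℂ :=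
    fun j => (U j)ᴴ * (U g * (Λ g + (α⁻¹ : ℂ) • Ξ g) * (U g)ᴴ) * U j with hD2def
  have hD2 : ∀ j, IsUnit ((σ2 : ℂ) • (1 : Matrix (Fin (r j)) (Fin (r j)) ℂ) + D2 j).det := by
    intro j
    have hS : (D2 j).PosSemidef := by
      rw [hD2def]
      exact (((hΛ g).add (pdΞ g)).posSemidef.mul_mul_conjTranspose_same
        (U g)).conjTranspose_mul_mul_same (U j)
    exact ((pd1 (r j)).add_posSemidef hS).det_pos.ne'.isUnit
  have hM2 : C g + Δ + (α⁻¹ : ℂ) • E g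
      = (σ2 : ℂ) • 1 + ∑ j, U j * D2 j * (U j)ᴴ := by
    have hsum : ∑ j, U j * D2 j * (U j)ᴴ = U g * (Λ g + (α⁻¹ : ℂ) • Ξ g) * (U g)ᴴ :=
      aux_sandwich r U hU horth g _
    rw [hsum, hC g, hΔ, hE g, Matrix.mul_add, Matrix.add_mul]
    have e : U g * ((α⁻¹ : ℂ) • Ξ g) * (U g)ᴴ = (α⁻¹ : ℂ) • (U g * Ξ g * (U g)ᴴ) := by
      rw [Matrix.mul_smul, Matrix.smul_mul]
    rw [e]
    abel
  have hD2g : (σ2 : ℂ) • 1 + D2 g = Λ g + T := by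
    rw [hD2def]
    simp only
    rw [hsand_g (Λ g + (α⁻¹ : ℂ) • Ξ g), hT]
    abel
  have eqB : C g - C g * (C g + Δ + (α⁻¹ : ℂ) • E g)⁻¹ * C g
      = U g * ((Λ g)⁻¹ + T⁻¹)⁻¹ * (U g)ᴴ := by
    rw [hM2, hC g, aux_core r U hU horth (σ2 : ℂ) hσ' D2 hD2 g (Λ g), hD2g,
      aux_key_inv (Λ g) T invΛ invT invΛT]
  exact ⟨eqA.trans eqB.symm, eqB⟩
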